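/- Let λ_i, λ_j, λ_k, and real coefficients b_{ij}, b_{kj}, b_{ik}, b_{ki}, b_{ij}' (standing for ∂_{r_k} b_{ij}) satisfy: 1 + λ_iλ_j ≠ 0, 1 + λ_kλ_j ≠ 0, 1 + λ_iλ_k ≠ 0, λ_i ≠ λ_k, and the identity (20): b_{ij}' · (λ_i−λ_k)(1+λ_j²)/((1+λ_iλ_j)(1+λ_kλ_j)) = b_{kj}(1 + (λ_k−λ_j)²/(1+λ_kλ_j)²)(b_{ik}(λ_i−λ_k)/(1+λ_iλ_k) − b_{ij}(λ_i−λ_j)/(1+λ_iλ_j)) − b_{ij}(1 + (λ_i−λ_j)²/(1+λ_iλ_j)²)(b_{ki}(λ_k−λ_i)/(1+λ_iλ_k) − b_{kj}(λ_k−λ_j)/(1+λ_kλ_j)). Define a_{pq} = b_{pq}(1+λ_q²)/(1+λ_pλ_q) and the corresponding expression D for ∂_{r_k} a_{ij} − ∂_{r_i} a_{kj} obtained by substituting (19) and (20) into (21). Then D = 0. -/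

import Mathlib

/-- The algebraic core of the converse direction of Bialy's Lemma 3.1.
`bij'` stands for `∂_{r_k} b_{ij} (= ∂_{r_i} b_{kj})`; the derivatives of the
`λ`'s are given by identity (19) and are substituted explicitly below;
hypothesis `h20` is identity (20); the conclusion `D = 0` is the vanishing of
the substituted expression (21) for `∂_{r_k} a_{ij} − ∂_{r_i} a_{kj}`. -/
theorem converse_direction_core
    (li lj lk bij bkj bik bki bij' : ℝ)
    (hij : 1 + li * lj ≠ 0) (hkj : 1 + lk * lj ≠ 0) (hik : 1 + li * lk ≠ 0)
    (hne : li ≠ lk)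
    (h20 : bij' * ((li - lk) * (1 + lj ^ 2) / ((1 + li * lj) * (1 + lk * lj))) =
      bkj * (1 + (lk - lj) ^ 2 / (1 + lk * lj) ^ 2) *
        (bik * (li - lk) / (1 + li * lk) - bij * (li - lj) / (1 + li * lj))
      - bij * (1 + (li - lj) ^ 2 / (1 + li * lj) ^ 2) *
        (bki * (lk - li) / (1 + li * lk) - bkj * (lk - lj) / (1 + lk * lj))) :
    -- derivatives of λ via identity (19)
    ∀ dklj dkli dilj dilk : ℝ,
      dklj = bkj * (1 + lj ^ 2) * (lk - lj) / (1 + lk * lj) →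
      dkli = bki * (1 + li ^ 2) * (lk - li) / (1 + lk * li) →
      dilj = bij * (1 + lj ^ 2) * (li - lj) / (1 + li * lj) →
      dilk = bik * (1 + lk ^ 2) * (li - lk) / (1 + li * lk) →
      -- expression (21) after substitution vanishes
      bij' * (lj * (lk - li) * (1 + lj ^ 2) / ((1 + li * lj) * (1 + lk * lj)))
        + bij * ((2 * lj * dklj * (1 + li * lj)
              - (1 + lj ^ 2) * (dkli * lj + li * dklj)) / (1 + li * lj) ^ 2)
        - bkj * ((2 * lj * dilj * (1 + lk * lj)
              - (1 + lj ^ 2) * (dilk * lj + lk * dilj)) / (1 + lk * lj) ^ 2)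
        = 0 := by
  intro dklj dkli dilj dilk h1 h2 h3 h4
  subst h1 h2 h3 h4
  have hrw : (1 : ℝ) + lk * li = 1 + li * lk := by ring
  rw [hrw]
  have hb : bij' * ((lk - li) * (1 + lj ^ 2) / ((1 + li * lj) * (1 + lk * lj))) =
      -(bkj * (1 + (lk - lj) ^ 2 / (1 + lk * lj) ^ 2) *
          (bik * (li - lk) / (1 + li * lk) - bij * (li - lj) / (1 + li * lj))
        - bij * (1 + (li - lj) ^ 2 / (1 + li * lj) ^ 2) *
          (bki * (lk - li) / (1 + li * lk) - bkj * (lk - lj) / (1 + lk * lj))) := by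
    linear_combination -h20
  have h1' : (2 * lj * ((1 + lj ^ 2) * (lk - lj) / (1 + lk * lj)) * (1 + li * lj)
        - (1 + lj ^ 2) * (li * ((1 + lj ^ 2) * (lk - lj) / (1 + lk * lj)))) / (1 + li * lj) ^ 2
      - (2 * lj * ((1 + lj ^ 2) * (li - lj) / (1 + li * lj)) * (1 + lk * lj)
        - (1 + lj ^ 2) * (lk * ((1 + lj ^ 2) * (li - lj) / (1 + li * lj)))) / (1 + lk * lj) ^ 2
      - lj * (-((1 + (lk - lj) ^ 2 / (1 + lk * lj) ^ 2) * ((li - lj) / (1 + li * lj)))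
          + (1 + (li - lj) ^ 2 / (1 + li * lj) ^ 2) * ((lk - lj) / (1 + lk * lj))) = 0 := by
    have hij' : 1 + lj * li ≠ 0 := by rwa [mul_comm] at hij
    have hkj' : 1 + lj * lk ≠ 0 := by rwa [mul_comm] at hkj
    have hik' : 1 + lk * li ≠ 0 := by rwa [mul_comm] at hik
    field_simp
    ring
  have h2' : -((1 + lj ^ 2) * (((1 + li ^ 2) * (lk - li) / (1 + li * lk)) * lj)) / (1 + li * lj) ^ 2
      + lj * ((1 + (li - lj) ^ 2 / (1 + li * lj) ^ 2) * ((lk - li) / (1 + li * lk))) = 0 := by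
    have hij' : 1 + lj * li ≠ 0 := by rwa [mul_comm] at hij
    have hkj' : 1 + lj * lk ≠ 0 := by rwa [mul_comm] at hkj
    have hik' : 1 + lk * li ≠ 0 := by rwa [mul_comm] at hik
    field_simp
    ring
  have h3' : (1 + lj ^ 2) * (((1 + lk ^ 2) * (li - lk) / (1 + li * lk)) * lj) / (1 + lk * lj) ^ 2
      - lj * ((1 + (lk - lj) ^ 2 / (1 + lk * lj) ^ 2) * ((li - lk) / (1 + li * lk))) = 0 := by
    have hij' : 1 + lj * li ≠ 0 := by rwa [mul_comm] at hij
    have hkj' : 1 + lj * lk ≠ 0 := by rwa [mul_comm] at hkj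
    have hik' : 1 + lk * li ≠ 0 := by rwa [mul_comm] at hik
    field_simp
    ring
  linear_combination lj * hb + bij * bkj * h1' + bij * bki * h2' + bkj * bik * h3'
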